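/- Let D be a DBM in ℝ^n (set {x ∈ ℝ^n : x_i - x_j ≥ D(i,j) ∀ i,j}) contained in the region R_g of a row-finite max-plus matrix A with finite coefficient g, and suppose the affine dynamics are x'_i = x_{g i} + A(i, g i). If D is in canonical form (tightest bounds: D(i,j) = sup {x_i - x_j : x ∈ D} for all i,j with D nonempty), then the image {x' ∈ ℝ^n : ∃ x ∈ D, x'_i = x_{g i} + A(i, g i) ∀ i} equals the DBM D' with D'(i,j) = D(g i, g j) + A(i, g i) - A(j, g j). -/

import Mathlib

open scoped BigOperators

/-- Max-plus matrix product over `EReal = ℝ ∪ {±∞}` (we use only `ℝ ∪ {-∞}`). -/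
noncomputable def mmul {n : ℕ} (A B : Fin n → Fin n → EReal) : Fin n → Fin n → EReal :=
  fun i j => ⨆ k, A i k + B k j

/-- Region matrix `A_g`: keeps the entry `A i (g i)` in each row `i`. -/
noncomputable def region {n : ℕ} (A : Fin n → Fin n → EReal) (g : Fin n → Fin n) :
    Fin n → Fin n → EReal :=
  fun i j => if j = g i then A i j else ⊥

/-- Conjugate matrix: `B^c(i,j) = -B(j,i)` when finite, `-∞` otherwise. -/
noncomputable def mconj {n : ℕ} (B : Fin n → Fin n → EReal) : Fin n → Fin n → EReal :=
  fun i j => if B j i = ⊥ then ⊥ else -B j i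

/-- Max-plus identity matrix. -/
noncomputable def Imat {n : ℕ} : Fin n → Fin n → EReal :=
  fun i j => if i = j then 0 else ⊥

/-- The set of points of `ℝ^n` described by a DBM `D` (constraints `x i - x j ≥ D i j`,
`-∞` bounds being vacuous). -/
def dbmSet {n : ℕ} (D : Fin n → Fin n → EReal) : Set (Fin n → ℝ) :=
  {x | ∀ i j, D i j ≤ ((x i - x j : ℝ) : EReal)}


private lemma ereal_shift {d : EReal} {r s t : ℝ} (h : d ≤ (t : EReal)) :
    d + (r : EReal) - (s : EReal) ≤ ((t + r - s : ℝ) : EReal) := by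
  induction d using EReal.rec with
  | bot => simp [EReal.bot_add, EReal.bot_sub]
  | coe d =>
    rw [← EReal.coe_add, ← EReal.coe_sub, EReal.coe_le_coe_iff] at *
    linarith
  | top => exact absurd h (by simp)

private lemma ereal_unshift {d : EReal} {r s t : ℝ}
    (h : d + (r : EReal) - (s : EReal) ≤ (t : EReal)) : d ≤ ((t - r + s : ℝ) : EReal) := by
  induction d using EReal.rec with
  | bot => simp
  | coe d =>
    rw [← EReal.coe_add, ← EReal.coe_sub, EReal.coe_le_coe_iff] at h
    rw [EReal.coe_le_coe_iff]; linarith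
  | top => rw [EReal.top_add_coe, EReal.top_sub_coe] at h; exact absurd h (by simp)

private lemma ereal_addl {d : EReal} {r t : ℝ} (h : d ≤ (t : EReal)) :
    (r : EReal) + d ≤ ((r + t : ℝ) : EReal) := by
  induction d using EReal.rec with
  | bot => simp
  | coe d =>
    rw [← EReal.coe_add, EReal.coe_le_coe_iff] at *; linarith
  | top => exact absurd h (by simp)

private lemma ereal_unaddr {d : EReal} {r t : ℝ} (h : d + (r : EReal) ≤ (t : EReal)) :
    d ≤ ((t - r : ℝ) : EReal) := by
  induction d using EReal.rec with
  | bot => simp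
  | coe d =>
    rw [← EReal.coe_add, EReal.coe_le_coe_iff] at h
    rw [EReal.coe_le_coe_iff]; linarith
  | top => rw [EReal.top_add_coe] at h; exact absurd h (by simp)


/-- the image of a canonical DBM `D` contained in `R_g` under the
affine dynamics `x'_i = x_{g i} + A(i, g i)` is the DBM
`D'(i,j) = D(g i, g j) + A(i, g i) - A(j, g j)`. -/
theorem image_of_canonical_dbm {n : ℕ} (A : Fin n → Fin n → EReal)
    (hrow : ∀ i, ∃ j, A i j ≠ ⊥) (htop : ∀ i j, A i j ≠ ⊤)
    (g : Fin n → Fin n) (hg : ∀ i, A i (g i) ≠ ⊥)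
    (D : Fin n → Fin n → EReal)
    (hsub : dbmSet D ⊆
      {x : Fin n → ℝ | ∀ i j, A i j - A i (g i) ≤ ((x (g i) - x j : ℝ) : EReal)})
    (hne : (dbmSet D).Nonempty)
    (hcanon : ∀ i j, (⨅ x ∈ dbmSet D, ((x i - x j : ℝ) : EReal)) = D i j) :
    {y : Fin n → ℝ | ∃ x ∈ dbmSet D, ∀ i, (y i : EReal) = (x (g i) : EReal) + A i (g i)} =
      dbmSet (fun i j => D (g i) (g j) + A i (g i) - A j (g j)) := by
  set a : Fin n → ℝ := fun i => (A i (g i)).toReal with ha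
  have hA : ∀ i, A i (g i) = ((a i : ℝ) : EReal) := fun i =>
    (EReal.coe_toReal (htop i (g i)) (hg i)).symm
  obtain ⟨w, hw⟩ := hne
  have hDtop : ∀ i j, D i j ≠ ⊤ := fun i j =>
    ne_top_of_le_ne_top (EReal.coe_ne_top _) (hw i j)
  have hDkk : ∀ k, D k k = 0 := by
    intro k
    rw [← hcanon k k]
    apply le_antisymm
    · refine le_trans (iInf₂_le w hw) ?_; simp
    · exact le_iInf₂ fun x hx => by simp
  have htri : ∀ i j k, D i j + D j k ≤ D i k := by
    intro i j k
    rw [← hcanon i k]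
    refine le_iInf₂ fun x hx => ?_
    calc D i j + D j k ≤ ((x i - x j : ℝ) : EReal) + ((x j - x k : ℝ) : EReal) :=
          add_le_add (hx i j) (hx j k)
      _ = ((x i - x k : ℝ) : EReal) := by rw [← EReal.coe_add]; norm_num
  ext y
  simp only [Set.mem_setOf_eq]
  constructor
  · rintro ⟨x, hx, hyx⟩ i j
    have hyi : ∀ i, y i = x (g i) + a i := by
      intro i
      have h := hyx i
      rw [hA i, ← EReal.coe_add, EReal.coe_eq_coe_iff] at h
      exact h
    show D (g i) (g j) + A i (g i) - A j (g j) ≤ ((y i - y j : ℝ) : EReal)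
    rw [hA i, hA j]
    have h2 := ereal_shift (r := a i) (s := a j) (hx (g i) (g j))
    have h3 : (x (g i) - x (g j) + a i - a j : ℝ) = y i - y j := by
      rw [hyi i, hyi j]; ring
    rwa [h3] at h2
  · intro hy
    rcases isEmpty_or_nonempty (Fin n) with hE | hNe
    · exact ⟨w, hw, fun i => (IsEmpty.false i).elim⟩
    set z : Fin n → ℝ := fun i => y i - a i with hz
    have hzD : ∀ i j, D (g i) (g j) ≤ ((z i - z j : ℝ) : EReal) := by
      intro i j
      have h1 : D (g i) (g j) + A i (g i) - A j (g j) ≤ ((y i - y j : ℝ) : EReal) := hy i j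
      rw [hA i, hA j] at h1
      have h2 := ereal_unshift h1
      have h3 : (y i - y j - a i + a j : ℝ) = z i - z j := by simp only [hz]; ring
      rwa [h3] at h2
    have hmax : ∀ m, ∃ i0, ∀ i, (z i : EReal) + D m (g i) ≤ (z i0 : EReal) + D m (g i0) :=
      fun m => Finite.exists_max _
    choose idx hidx using hmax
    set L : Fin n → EReal := fun m => (z (idx m) : EReal) + D m (g (idx m)) with hL
    have hLtop : ∀ m, L m ≠ ⊤ := by
      intro m h
      have : L m ≤
          ((z (idx m) + (w m - w (g (idx m))) : ℝ) : EReal) := ereal_addl (hw m (g (idx m)))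
      rw [h] at this
      exact absurd (top_le_iff.mp this) (EReal.coe_ne_top _)
    have hLg : ∀ i, L (g i) = ((z i : ℝ) : EReal) := by
      intro i
      apply le_antisymm
      · have h1 : D (g i) (g (idx (g i))) ≤ ((z i - z (idx (g i)) : ℝ) : EReal) :=
          hzD i (idx (g i))
        have h2 := ereal_addl (r := z (idx (g i))) h1
        have h3 : (z (idx (g i)) + (z i - z (idx (g i))) : ℝ) = z i := by ring
        rw [h3] at h2
        exact h2
      · have h1 := hidx (g i) i
        rwa [hDkk (g i), add_zero] at h1
    have htriL : ∀ m k, D m k + L k ≤ L m := by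
      intro m k
      have h1 : (z (idx k) : EReal) + (D m k + D k (g (idx k))) ≤
          (z (idx k) : EReal) + D m (g (idx k)) := add_le_add_right (htri m k (g (idx k))) _
      have h2 := le_trans h1 (hidx m (idx k))
      calc D m k + L k = (z (idx k) : EReal) + (D m k + D k (g (idx k))) := by
            rw [hL]; rw [← add_assoc, add_comm (D m k) ((z (idx k) : ℝ) : EReal), add_assoc]
        _ ≤ L m := h2
    set f : Fin n → ℝ := fun m => (L m).toReal with hf
    have hfL : ∀ m, L m ≠ ⊥ → ((f m : ℝ) : EReal) = L m := fun m hm =>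
      EReal.coe_toReal (hLtop m) hm
    have hBk : ∀ m k, L m = ⊥ → L k ≠ ⊥ → D m k = ⊥ := by
      intro m k hm hk
      by_contra hD
      have h1 := htriL m k
      rw [hm, ← hfL k hk, ← EReal.coe_toReal (hDtop m k) hD, ← EReal.coe_add] at h1
      exact absurd (le_bot_iff.mp h1) (EReal.coe_ne_bot _)
    set C : ℝ := Finset.univ.sup' (Finset.univ_nonempty)
      (fun p : Fin n × Fin n => (D p.1 p.2).toReal + w p.2 - f p.1) with hC
    have hCle : ∀ k m, (D k m).toReal + w m - f k ≤ C := fun k m =>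
      Finset.le_sup' (fun p : Fin n × Fin n => (D p.1 p.2).toReal + w p.2 - f p.1)
        (Finset.mem_univ (k, m))
    set x : Fin n → ℝ := fun m => if L m = ⊥ then w m - C else f m with hxdef
    have hx : x ∈ dbmSet D := by
      intro p q
      by_cases hp : L p = ⊥ <;> by_cases hq : L q = ⊥
      · have : x p - x q = w p - w q := by simp [hxdef, hp, hq]
        rw [this]; exact hw p q
      · rw [hBk p q hp hq]; exact bot_le
      · by_cases hD : D p q = ⊥
        · rw [hD]; exact bot_le
        · have h1 : x p - x q = f p - w q + C := by simp [hxdef, hp, hq]; ring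
          rw [h1, ← EReal.coe_toReal (hDtop p q) hD, EReal.coe_le_coe_iff]
          have := hCle p q
          linarith
      · have h1 : x p - x q = f p - f q := by simp [hxdef, hp, hq]
        rw [h1]
        have h2 := htriL p q
        rw [← hfL p hp, ← hfL q hq] at h2
        exact ereal_unaddr h2
    have hxg : ∀ i, x (g i) = z i := by
      intro i
      have h1 : L (g i) ≠ ⊥ := by rw [hLg i]; exact EReal.coe_ne_bot _
      have h2 : ((f (g i) : ℝ) : EReal) = ((z i : ℝ) : EReal) := by
        rw [hfL (g i) h1, hLg i]
      simp only [hxdef, if_neg h1]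
      exact EReal.coe_eq_coe_iff.mp h2
    refine ⟨x, hx, fun i => ?_⟩
    rw [hA i, hxg i, ← EReal.coe_add, EReal.coe_eq_coe_iff]
    simp only [hz]; ring
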